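/- Euler's summation formula: if a, b, c are real (or complex) numbers with Re(c − a − b) > 0 and c is not a nonpositive integer, then ₂F₁(a, b; c; 1) = Γ(c)Γ(c−a−b) / (Γ(c−a)Γ(c−b)). -/

import Mathlib

open scoped BigOperators
open Real MeasureTheory Filter Set
open scoped Topology

noncomputable def poch (a : ℝ) (n : ℕ) : ℝ := ∏ i ∈ Finset.range n, (a + i)

noncomputable def F21 (a b c t : ℝ) : ℝ :=
  ∑' n : ℕ, poch a n * poch b n / (poch c n * n.factorial) * t ^ n

noncomputable def F32 (a b c d e t : ℝ) : ℝ :=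
  ∑' n : ℕ, poch a n * poch b n * poch c n / (poch d n * poch e n * n.factorial) * t ^ n

noncomputable def Beta (x y : ℝ) : ℝ := Real.Gamma x * Real.Gamma y / Real.Gamma (x + y)

/-- the term of the ₂F₁ series at t = 1 -/
noncomputable def hT (a b c : ℝ) (n : ℕ) : ℝ :=
  poch a n * poch b n / (poch c n * n.factorial)

lemma poch_zero (x : ℝ) : poch x 0 = 1 := by simp [poch]

lemma poch_succ (x : ℝ) (n : ℕ) : poch x (n + 1) = poch x n * (x + n) := by
  simp [poch, Finset.prod_range_succ]

lemma poch_succ_left (x : ℝ) (n : ℕ) : poch x (n + 1) = x * poch (x + 1) n := by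
  induction n with
  | zero => simp [poch]
  | succ n ih =>
      rw [poch_succ, ih, poch_succ, mul_assoc]
      push_cast; ring_nf

lemma poch_pos {x : ℝ} (hx : 0 < x) (n : ℕ) : 0 < poch x n := by
  apply Finset.prod_pos
  intro i _
  positivity

lemma poch_ne_zero {x : ℝ} (hx : ∀ i : ℕ, x + i ≠ 0) (n : ℕ) : poch x n ≠ 0 :=
  Finset.prod_ne_zero_iff.2 fun i _ => hx i

lemma poch_eq_zero {x : ℝ} {i n : ℕ} (hi : i < n) (hx : x + i = 0) : poch x n = 0 :=
  Finset.prod_eq_zero (Finset.mem_range.2 hi) hx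

lemma abs_poch_le {x K : ℝ} (hK : |x| ≤ K) (n : ℕ) : |poch x n| ≤ poch K n := by
  rw [poch, poch, Finset.abs_prod]
  apply Finset.prod_le_prod (fun i _ => abs_nonneg _)
  intro i _
  calc |x + (i:ℝ)| ≤ |x| + |(i:ℝ)| := abs_add_le _ _
    _ ≤ K + i := by
        have : |(i:ℝ)| = (i:ℝ) := abs_of_nonneg (by positivity)
        rw [this]; linarith

lemma poch_le_poch {x y : ℝ} (hx : 0 < x) (hxy : x ≤ y) (n : ℕ) : poch x n ≤ poch y n := by
  apply Finset.prod_le_prod (fun i _ => by positivity)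
  intro i _; linarith

lemma hT_zero (a b c : ℝ) : hT a b c 0 = 1 := by simp [hT, poch_zero]

lemma hT_succ (a b c : ℝ) (n : ℕ) (hc : poch c n ≠ 0) (hcn : c + n ≠ 0) :
    hT a b c (n + 1) = hT a b c n * ((a + n) * (b + n) / ((c + n) * (n + 1))) := by
  have hf : (n.factorial : ℝ) ≠ 0 := Nat.cast_ne_zero.2 n.factorial_ne_zero
  rw [hT, hT, poch_succ, poch_succ, poch_succ, Nat.factorial_succ]
  push_cast
  field_simp

lemma hT_bound (a b c : ℝ) (h : 0 < c - a - b) (hcne : ∀ i : ℕ, c + i ≠ 0) :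
    ∃ C : ℝ, 0 ≤ C ∧ ∃ N : ℕ, 1 ≤ N ∧ ∀ n, N ≤ n →
      |hT a b c n| ≤ C * (n : ℝ) ^ (-(1 + (c - a - b) / 2)) := by
  set δ : ℝ := (c - a - b) / 2 with hδdef
  have hδ : 0 < δ := by positivity
  set p : ℝ := 1 + δ with hpdef
  obtain ⟨N₀, hN₀⟩ := exists_nat_gt (max (max |a| |b|) (max |c| (|a * b + c * δ| / δ)))
  set N := N₀ + 1 with hNdef
  have hN : (max (max |a| |b|) (max |c| (|a * b + c * δ| / δ))) < N := by
    have : (N₀ : ℝ) ≤ N := by exact_mod_cast Nat.le_succ N₀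
    linarith
  have hNa : |a| < N := lt_of_le_of_lt (le_max_left _ _ |>.trans (le_max_left _ _)) hN
  have hNb : |b| < N := lt_of_le_of_lt (le_max_right _ _ |>.trans (le_max_left _ _)) hN
  have hNc : |c| < N := lt_of_le_of_lt (le_max_left _ _ |>.trans (le_max_right _ _)) hN
  have hNq : |a * b + c * δ| / δ < N :=
    lt_of_le_of_lt (le_max_right _ _ |>.trans (le_max_right _ _)) hN
  refine ⟨|hT a b c N| * (N : ℝ) ^ p, by positivity, N, Nat.le_add_left 1 N₀, ?_⟩
  -- monotonicity of u n = |hT n| * n ^ p for n ≥ N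
  have key : ∀ n, N ≤ n → |hT a b c n| * (n : ℝ) ^ p ≤ |hT a b c N| * (N : ℝ) ^ p := by
    intro n hn
    induction n, hn using Nat.le_induction with
    | base => exact le_refl _
    | succ n hn ih =>
        have hnN : (N : ℝ) ≤ n := by exact_mod_cast hn
        have hn1 : (1 : ℝ) ≤ n := by
          have : (1:ℕ) ≤ n := le_trans (Nat.le_add_left 1 N₀) hn
          exact_mod_cast this
        have hna : 0 < a + n := by
          have := (abs_lt.1 hNa).1; linarith
        have hnb : 0 < b + n := by
          have := (abs_lt.1 hNb).1; linarith
        have hnc : 0 < c + n := by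
          have := (abs_lt.1 hNc).1; linarith
        have hstep : |hT a b c (n+1)| = |hT a b c n| * ((a + n) * (b + n) / ((c + n) * (n + 1))) := by
          rw [hT_succ a b c n (poch_ne_zero hcne n) (ne_of_gt hnc), abs_mul]
          congr 1
          rw [abs_of_pos]
          positivity
        -- Bernoulli: ((n:ℝ)/(n+1)) ^ p ≥ (n + 1 - p)/(n+1)
        have hbern : (1 : ℝ) - p / (n + 1) ≤ ((n:ℝ) / (n + 1)) ^ p := by
          have h1 : ((n:ℝ) / (n + 1)) = 1 + (-(1/(n+1))) := by field_simp; ring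
          have h2 := one_add_mul_self_le_rpow_one_add
            (s := -(1/((n:ℝ)+1))) (by
              rw [neg_le, neg_neg]
              have : (1:ℝ)/((n:ℝ)+1) ≤ 1 := by
                rw [div_le_one (by linarith)]; linarith
              linarith) (p := p) (by simp [hpdef]; linarith)
          rw [h1]
          calc (1:ℝ) - p / (n+1) = 1 + p * (-(1/(n+1))) := by ring
            _ ≤ _ := h2
        -- the algebraic inequality (a+n)(b+n) ≤ (c+n)(n+1-p)
        have halg : (a + n) * (b + n) ≤ (c + n) * ((n:ℝ) + 1 - p) := by
          have hq : |a * b + c * δ| < δ * n := by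
            rw [div_lt_iff₀ hδ] at hNq
            calc |a * b + c * δ| < N * δ := hNq
              _ ≤ n * δ := by nlinarith
              _ = δ * n := by ring
          have := (abs_lt.1 hq).2
          have habs := neg_abs_le (a * b + c * δ)
          simp only [hpdef, hδdef] at *
          nlinarith
        -- conclude the ratio inequality
        have hratio : (a + n) * (b + n) / ((c + n) * (n + 1)) * ((n:ℝ)+1) ^ p ≤ (n:ℝ) ^ p := by
          have hn1p : (0:ℝ) < (n:ℝ) + 1 := by linarith
          have hpow : (0:ℝ) < ((n:ℝ)+1) ^ p := rpow_pos_of_pos hn1p p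
          have hdivpow : ((n:ℝ) / (n + 1)) ^ p = (n:ℝ) ^ p / ((n:ℝ)+1) ^ p :=
            Real.div_rpow (by linarith) (by linarith) p
          rw [div_mul_eq_mul_div, div_le_iff₀ (by positivity)]
          calc (a + n) * (b + n) * ((n:ℝ)+1) ^ p
              ≤ (c + n) * ((n:ℝ) + 1 - p) * ((n:ℝ)+1) ^ p := by nlinarith
            _ = (c + n) * ((n:ℝ)+1) * ((1 - p/((n:ℝ)+1)) * ((n:ℝ)+1) ^ p) := by
                field_simp
            _ ≤ (c + n) * ((n:ℝ)+1) * (((n:ℝ)/(n+1)) ^ p * ((n:ℝ)+1) ^ p) := by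
                apply mul_le_mul_of_nonneg_left _ (by positivity)
                exact mul_le_mul_of_nonneg_right hbern (le_of_lt hpow)
            _ = (n:ℝ) ^ p * ((c + n) * ((n:ℝ)+1)) := by rw [hdivpow]; field_simp
        have hcast : ((n+1 : ℕ):ℝ) = (n:ℝ) + 1 := by push_cast; ring
        rw [hcast]
        calc |hT a b c (n+1)| * ((n:ℝ)+1) ^ p
            = |hT a b c n| * ((a + n) * (b + n) / ((c + n) * (n + 1)) * ((n:ℝ)+1) ^ p) := by
              rw [hstep]; push_cast; ring
          _ ≤ |hT a b c n| * (n:ℝ) ^ p := by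
              exact mul_le_mul_of_nonneg_left hratio (abs_nonneg _)
          _ ≤ _ := ih
  intro n hn
  have hnpos : (0:ℝ) < n := by
    have : (1:ℕ) ≤ n := le_trans (Nat.le_add_left 1 N₀) hn
    exact_mod_cast lt_of_lt_of_le zero_lt_one (by exact_mod_cast this)
  have := key n hn
  have hrw : ((n:ℝ)) ^ (-(1 + (c - a - b)/2)) = ((n:ℝ) ^ p)⁻¹ := by
    rw [← Real.rpow_neg (le_of_lt hnpos)]
  rw [hrw, mul_comm (|hT a b c N| * (N:ℝ)^p), ← div_eq_inv_mul, le_div_iff₀ (rpow_pos_of_pos hnpos p)]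
  linarith [this]

lemma summable_abs_hT (a b c : ℝ) (h : 0 < c - a - b) (hcne : ∀ i : ℕ, c + i ≠ 0) :
    Summable (fun n => |hT a b c n|) := by
  obtain ⟨C, hC, N, hN1, hb⟩ := hT_bound a b c h hcne
  set p : ℝ := 1 + (c - a - b) / 2 with hp
  have hp1 : 1 < p := by rw [hp]; linarith
  rw [← summable_nat_add_iff N]
  have hsum : Summable (fun n : ℕ => C * ((n + N : ℕ) : ℝ) ^ (-p)) := by
    apply Summable.mul_left
    have base : Summable (fun n : ℕ => ((n:ℝ)) ^ (-p)) := by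
      have := Real.summable_nat_rpow_inv.2 hp1
      apply this.congr
      intro n
      rw [← Real.rpow_neg (Nat.cast_nonneg n)]
    exact (summable_nat_add_iff N).2 base
  apply Summable.of_nonneg_of_le (fun n => abs_nonneg _) _ hsum
  intro n
  exact hb (n + N) (Nat.le_add_left N n)

lemma summable_hT (a b c : ℝ) (h : 0 < c - a - b) (hcne : ∀ i : ℕ, c + i ≠ 0) :
    Summable (hT a b c) :=
  (summable_abs_hT a b c h hcne).of_abs

lemma tendsto_n_hT (a b c : ℝ) (h : 0 < c - a - b) (hcne : ∀ i : ℕ, c + i ≠ 0) :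
    Tendsto (fun n : ℕ => (n : ℝ) * hT a b c n) atTop (𝓝 0) := by
  obtain ⟨C, hC, N, hN1, hb⟩ := hT_bound a b c h hcne
  set δ : ℝ := (c - a - b) / 2 with hδ
  have hδ0 : 0 < δ := by rw [hδ]; linarith
  have hg : Tendsto (fun n : ℕ => C * (n : ℝ) ^ (-δ)) atTop (𝓝 0) := by
    have h1 : Tendsto (fun x : ℝ => x ^ (-δ)) atTop (𝓝 0) := tendsto_rpow_neg_atTop hδ0
    have h2 : Tendsto (fun n : ℕ => ((n : ℝ)) ^ (-δ)) atTop (𝓝 0) :=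
      h1.comp tendsto_natCast_atTop_atTop
    simpa using h2.const_mul C
  apply squeeze_zero_norm' _ hg
  filter_upwards [eventually_ge_atTop N] with n hn
  have hnpos : (0:ℝ) < n := by
    have : (1:ℕ) ≤ n := le_trans hN1 hn
    exact_mod_cast lt_of_lt_of_le zero_lt_one (by exact_mod_cast this)
  have := hb n hn
  have key : (n:ℝ) * ((n:ℝ) ^ (-(1 + δ))) = (n:ℝ) ^ (-δ) := by
    nth_rewrite 1 [← Real.rpow_one (n:ℝ)]
    rw [← Real.rpow_add hnpos]
    norm_num
  calc ‖(n:ℝ) * hT a b c n‖ = (n:ℝ) * |hT a b c n| := by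
        rw [norm_mul]; simp [abs_of_pos hnpos]
    _ ≤ (n:ℝ) * (C * (n:ℝ) ^ (-(1 + δ))) := by
        apply mul_le_mul_of_nonneg_left _ (le_of_lt hnpos)
        exact this
    _ = C * ((n:ℝ) * ((n:ℝ) ^ (-(1+δ)))) := by ring
    _ = C * (n:ℝ) ^ (-δ) := by rw [key]

lemma contiguous (a b c : ℝ) (h : 0 < c - a - b) (hcne : ∀ i : ℕ, c + i ≠ 0) :
    c * (c - a - b) * ∑' n, hT a b c n = (c - a) * (c - b) * ∑' n, hT a b (c + 1) n := by
  have hcne' : ∀ i : ℕ, (c + 1) + i ≠ 0 := by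
    intro i
    have := hcne (i + 1)
    push_cast at this ⊢
    intro hcon; apply this; linarith
  have h' : 0 < (c + 1) - a - b := by linarith
  have hc0 : c ≠ 0 := by have := hcne 0; simpa using this
  -- certificate identity
  have cert : ∀ n : ℕ, c * (c - a - b) * hT a b c n - (c - a) * (c - b) * hT a b (c + 1) n
      = c * n * hT a b c n - c * (n + 1) * hT a b c (n + 1) := by
    intro n
    have hpc : poch c n ≠ 0 := poch_ne_zero hcne n
    have hcn : c + (n:ℝ) ≠ 0 := hcne n
    have hfac : ((n.factorial : ℝ)) ≠ 0 := Nat.cast_ne_zero.2 n.factorial_ne_zero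
    have hrel : c * poch (c + 1) n = poch c n * (c + n) := by
      rw [← poch_succ_left, poch_succ]
    have hpc1 : poch (c+1) n = poch c n * (c + n) / c := by
      rw [eq_div_iff hc0]
      linear_combination hrel
    rw [hT, hT, hT, poch_succ a n, poch_succ b n, poch_succ c n, Nat.factorial_succ, hpc1]
    push_cast
    field_simp
    ring
  have hsum1 := summable_hT a b c h hcne
  have hsum2 := summable_hT a b (c+1) h' hcne'
  have hS : Summable (fun n => c * (c - a - b) * hT a b c n - (c - a) * (c - b) * hT a b (c + 1) n) :=
    (hsum1.mul_left _).sub (hsum2.mul_left _)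
  have htsum : ∑' n, (c * (c - a - b) * hT a b c n - (c - a) * (c - b) * hT a b (c + 1) n)
      = c * (c - a - b) * ∑' n, hT a b c n - (c - a) * (c - b) * ∑' n, hT a b (c + 1) n := by
    rw [Summable.tsum_sub (hsum1.mul_left _) (hsum2.mul_left _), tsum_mul_left, tsum_mul_left]
  -- partial sums telescope
  have hpartial : ∀ N : ℕ, ∑ n ∈ Finset.range N,
      (c * (c - a - b) * hT a b c n - (c - a) * (c - b) * hT a b (c + 1) n)
      = c * ((0:ℕ):ℝ) * hT a b c 0 - c * N * hT a b c N := by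
    intro N
    rw [Finset.sum_congr rfl (fun n _ => cert n)]
    have := Finset.sum_range_sub' (fun n => c * (n:ℝ) * hT a b c n) N
    convert this using 2 with n
    push_cast
    ring
  have hlim : Tendsto (fun N : ℕ => ∑ n ∈ Finset.range N,
      (c * (c - a - b) * hT a b c n - (c - a) * (c - b) * hT a b (c + 1) n)) atTop (𝓝 0) := by
    simp only [hpartial]
    have : Tendsto (fun N : ℕ => c * ((N:ℝ) * hT a b c N)) atTop (𝓝 (c * 0)) :=
      (tendsto_n_hT a b c h hcne).const_mul c
    simp only [Nat.cast_zero, zero_mul, mul_zero, zero_sub] at this ⊢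
    convert this.neg using 2 with N
    · ring
    · simp
  have hzero : ∑' n, (c * (c - a - b) * hT a b c n - (c - a) * (c - b) * hT a b (c + 1) n) = 0 :=
    tendsto_nhds_unique hS.hasSum.tendsto_sum_nat hlim
  rw [htsum] at hzero
  linarith

lemma shift_eq (a b c : ℝ) (h : 0 < c - a - b) (hcne : ∀ i : ℕ, c + i ≠ 0) (m : ℕ) :
    poch c m * poch (c - a - b) m * ∑' n, hT a b c n
      = poch (c - a) m * poch (c - b) m * ∑' n, hT a b (c + m) n := by
  induction m with
  | zero => simp [poch_zero]
  | succ m ih =>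
      have hcm : ∀ i : ℕ, (c + m) + i ≠ 0 := by
        intro i
        have := hcne (m + i)
        push_cast at this ⊢
        intro hcon; apply this; linarith
      have hm : 0 < (c + m) - a - b := by
        have : (0:ℝ) ≤ m := Nat.cast_nonneg m
        linarith
      have hcont := contiguous a b (c + m) hm hcm
      have hrw : ((c + m) + 1 : ℝ) = c + ((m : ℕ) + 1 : ℕ) := by push_cast; ring
      rw [hrw] at hcont
      rw [poch_succ, poch_succ, poch_succ, poch_succ]
      have e1 : poch c m * (c + m) * (poch (c-a-b) m * (c - a - b + m)) * ∑' n, hT a b c n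
          = poch (c-a-b) m * poch c m * ((c+m) * ((c+m) - a - b) * ∑' n, hT a b c n) := by ring
      calc poch c m * (c + m) * (poch (c-a-b) m * (c - a - b + m)) * ∑' n, hT a b c n
          = (c + m) * (c - a - b + m) * (poch c m * poch (c-a-b) m * ∑' n, hT a b c n) := by ring
        _ = (c + m) * (c - a - b + m) * (poch (c-a) m * poch (c-b) m * ∑' n, hT a b (c + m) n) := by rw [ih]
        _ = poch (c-a) m * poch (c-b) m * ((c+m) * ((c+m) - a - b) * ∑' n, hT a b (c+m) n) := by ring
        _ = poch (c-a) m * poch (c-b) m * (((c+m) - a) * ((c+m) - b) * ∑' n, hT a b (c + ((m:ℕ)+1:ℕ)) n) := by rw [hcont]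
        _ = poch (c-a) m * (c - a + m) * (poch (c-b) m * (c - b + m)) * ∑' n, hT a b (c + ((m:ℕ)+1:ℕ)) n := by ring

set_option maxHeartbeats 1000000 in
lemma tendsto_F_one (a b c : ℝ) (h : 0 < c - a - b) (hcne : ∀ i : ℕ, c + i ≠ 0) :
    Tendsto (fun m : ℕ => ∑' n, hT a b (c + m) n) atTop (𝓝 1) := by
  obtain ⟨K, hK0, hKa, hKb⟩ : ∃ K : ℝ, 0 ≤ K ∧ |a| ≤ K ∧ |b| ≤ K :=
    ⟨max |a| |b|, le_trans (abs_nonneg a) (le_max_left _ _), le_max_left _ _, le_max_right _ _⟩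
  obtain ⟨c₀, hc₀pos, hc₀h, hc₀ne⟩ :
      ∃ c₀ : ℝ, 0 < c₀ ∧ 0 < c₀ - K - K ∧ ∀ i : ℕ, c₀ + (i:ℝ) ≠ 0 :=
    ⟨2 * K + 1, by positivity, by linarith, fun i => by positivity⟩
  have hdom : Summable (fun n => |hT K K c₀ n|) := summable_abs_hT K K c₀ hc₀h hc₀ne
  obtain ⟨S, hS0, hS⟩ : ∃ S : ℝ, 0 ≤ S ∧ S = ∑' n, |hT K K c₀ (n + 1)| :=
    ⟨∑' n, |hT K K c₀ (n + 1)|, tsum_nonneg (fun n => abs_nonneg _), rfl⟩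
  obtain ⟨m₀, hm₀⟩ := exists_nat_ge (c₀ - c)
  -- hypotheses for c + m
  have hcm : ∀ m : ℕ, ∀ i : ℕ, (c + m) + i ≠ 0 := by
    intro m i
    have := hcne (m + i); push_cast at this ⊢
    intro hcon; apply this; linarith
  have hmh : ∀ m : ℕ, 0 < (c + m) - a - b := by
    intro m; have : (0:ℝ) ≤ m := Nat.cast_nonneg m; linarith
  -- main bound : for m ≥ m₀, |F(c+m) - 1| ≤ c₀ * S / (c + m)
  have hbound : ∀ m : ℕ, m₀ ≤ m → ‖(∑' n, hT a b (c + m) n) - 1‖ ≤ c₀ * S / (c + m) := by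
    intro m hm
    have hcmge : c₀ ≤ c + m := by
      have : (m₀ : ℝ) ≤ m := by exact_mod_cast hm
      linarith
    have hcmpos : 0 < c + m := lt_of_lt_of_le hc₀pos hcmge
    have hsum := summable_hT a b (c + m) (hmh m) (hcm m)
    have htail : (∑' n, hT a b (c + m) n) = 1 + ∑' n, hT a b (c + m) (n + 1) := by
      rw [Summable.tsum_eq_zero_add hsum, hT_zero]
    -- termwise bound for n+1 terms
    have hterm : ∀ n : ℕ, |hT a b (c + m) (n + 1)| ≤ (c₀ / (c + m)) * |hT K K c₀ (n + 1)| := by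
      intro n
      set k := n + 1 with hk
      have hpa : |poch a k| ≤ poch K k := abs_poch_le hKa k
      have hpb : |poch b k| ≤ poch K k := abs_poch_le hKb k
      have hpK : 0 ≤ poch K k := le_trans (abs_nonneg _) hpa
      have hpcm : 0 < poch (c + m) k := poch_pos hcmpos k
      have hpc₀ : 0 < poch c₀ k := poch_pos hc₀pos k
      have hfac : (0:ℝ) < (k.factorial : ℝ) := Nat.cast_pos.2 (Nat.factorial_pos _)
      have hpochc : (c + m) * poch c₀ k ≤ c₀ * poch (c + m) k := by
        rw [hk, poch_succ_left, poch_succ_left]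
        have h1 : poch (c₀ + 1) n ≤ poch (c + m + 1) n :=
          poch_le_poch (by positivity) (by linarith) n
        calc (c + m) * (c₀ * poch (c₀ + 1) n) = c₀ * (c + m) * poch (c₀ + 1) n := by ring
          _ ≤ c₀ * (c + m) * poch (c + m + 1) n := by
              apply mul_le_mul_of_nonneg_left h1 (by positivity)
          _ = c₀ * ((c + m) * poch (c + m + 1) n) := by ring
      have habsT : |hT a b (c + m) k| = |poch a k| * |poch b k| / (poch (c + m) k * k.factorial) := by
        rw [hT, abs_div, abs_mul, abs_of_pos (by positivity : (0:ℝ) < poch (c+m) k * k.factorial)]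
      have habsT2 : |hT K K c₀ k| = poch K k * poch K k / (poch c₀ k * k.factorial) := by
        rw [hT, abs_of_nonneg]
        positivity
      rw [habsT, habsT2, div_mul_div_comm]
      rw [div_le_div_iff₀ (by positivity) (by positivity)]
      calc |poch a k| * |poch b k| * ((c + m) * (poch c₀ k * ↑k.factorial))
          = (|poch a k| * |poch b k|) * ((c + m) * poch c₀ k) * (↑k.factorial) := by ring
        _ ≤ (poch K k * poch K k) * (c₀ * poch (c + m) k) * (↑k.factorial) := by
            apply mul_le_mul_of_nonneg_right _ (le_of_lt hfac)
            apply mul_le_mul _ hpochc (by positivity) (by positivity)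
            exact mul_le_mul hpa hpb (abs_nonneg _) hpK
        _ = c₀ * (poch K k * poch K k) * (poch (c + m) k * ↑k.factorial) := by ring
    -- sum the bound
    have hsumabs : Summable (fun n => |hT a b (c + m) (n + 1)|) :=
      (summable_nat_add_iff 1).2 (summable_abs_hT a b (c + m) (hmh m) (hcm m))
    have hdomshift : Summable (fun n => |hT K K c₀ (n + 1)|) := (summable_nat_add_iff 1).2 hdom
    calc ‖(∑' n, hT a b (c + m) n) - 1‖ = ‖∑' n, hT a b (c + m) (n + 1)‖ := by
          rw [htail]; congr 1; ring
      _ ≤ ∑' n, |hT a b (c + m) (n + 1)| := by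
          have := norm_tsum_le_tsum_norm (f := fun n => hT a b (c + m) (n+1))
            (by simpa [Real.norm_eq_abs] using hsumabs)
          simpa [Real.norm_eq_abs] using this
      _ ≤ ∑' n, (c₀ / (c + m)) * |hT K K c₀ (n + 1)| :=
          Summable.tsum_le_tsum hterm hsumabs (hdomshift.mul_left _)
      _ = c₀ * S / (c + m) := by
          rw [tsum_mul_left, hS]; ring
  -- conclude
  have hfadd : Tendsto (fun m : ℕ => c + (m:ℝ)) atTop atTop :=
    tendsto_atTop_add_const_left _ c tendsto_natCast_atTop_atTop
  have hg : Tendsto (fun m : ℕ => c₀ * S / (c + m)) atTop (𝓝 0) := by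
    rw [show (0:ℝ) = c₀ * S * 0 by ring]
    simpa [div_eq_mul_inv] using (hfadd.inv_tendsto_atTop).const_mul (c₀ * S)
  have hz : Tendsto (fun m : ℕ => (∑' n, hT a b (c + m) n) - 1) atTop (𝓝 0) := by
    apply squeeze_zero_norm' _ hg
    filter_upwards [eventually_ge_atTop m₀] with m hm using hbound m hm
  have := hz.add_const 1
  simpa using this

lemma tendsto_R (a b c : ℝ) (h : 0 < c - a - b) (hc : ∀ n : ℕ, c ≠ -n) :
    Tendsto (fun m : ℕ => poch (c-a) m * poch (c-b) m / (poch c m * poch (c-a-b) m))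
      atTop (𝓝 (Real.Gamma c * Real.Gamma (c-a-b) / (Real.Gamma (c-a) * Real.Gamma (c-b)))) := by
  have hcne : ∀ i : ℕ, c + (i:ℝ) ≠ 0 := by
    intro i hcon
    exact hc i (by linarith)
  by_cases hdeg : (∃ m : ℕ, c - a = -m) ∨ (∃ m : ℕ, c - b = -m)
  · -- degenerate case: Gamma (c-a) or Gamma (c-b) is zero and R is eventually zero
    have hR0 : ∀ᶠ m in atTop, poch (c-a) m * poch (c-b) m / (poch c m * poch (c-a-b) m) = 0 := by
      rcases hdeg with ⟨m₀, hm₀⟩ | ⟨m₀, hm₀⟩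
      · filter_upwards [eventually_ge_atTop (m₀ + 1)] with m hm
        rw [poch_eq_zero (i := m₀) (by omega) (by rw [hm₀]; ring), zero_mul, zero_div]
      · filter_upwards [eventually_ge_atTop (m₀ + 1)] with m hm
        rw [poch_eq_zero (i := m₀) (x := c - b) (by omega) (by rw [hm₀]; ring), mul_zero, zero_div]
    have hG0 : Real.Gamma (c-a) * Real.Gamma (c-b) = 0 := by
      rcases hdeg with ⟨m₀, hm₀⟩ | ⟨m₀, hm₀⟩
      · rw [hm₀, Real.Gamma_neg_nat_eq_zero, zero_mul]
      · rw [hm₀, Real.Gamma_neg_nat_eq_zero, mul_zero]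
    rw [hG0, div_zero]
    exact Tendsto.congr' (hR0.mono fun m hm => hm.symm) tendsto_const_nhds
  · push_neg at hdeg
    obtain ⟨hda, hdb⟩ := hdeg
    have hGa : Real.Gamma (c-a) ≠ 0 := Real.Gamma_ne_zero hda
    have hGb : Real.Gamma (c-b) ≠ 0 := Real.Gamma_ne_zero hdb
    have hdane : ∀ i : ℕ, (c - a) + (i:ℝ) ≠ 0 := fun i hcon => hda i (by linarith)
    have hdbne : ∀ i : ℕ, (c - b) + (i:ℝ) ≠ 0 := fun i hcon => hdb i (by linarith)
    have hG : Tendsto (fun n : ℕ => Real.GammaSeq c n * Real.GammaSeq (c-a-b) n /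
        (Real.GammaSeq (c-a) n * Real.GammaSeq (c-b) n)) atTop
        (𝓝 (Real.Gamma c * Real.Gamma (c-a-b) / (Real.Gamma (c-a) * Real.Gamma (c-b)))) :=
      Tendsto.div ((Real.GammaSeq_tendsto_Gamma c).mul (Real.GammaSeq_tendsto_Gamma (c-a-b)))
        ((Real.GammaSeq_tendsto_Gamma (c-a)).mul (Real.GammaSeq_tendsto_Gamma (c-b)))
        (mul_ne_zero hGa hGb)
    have heq : ∀ᶠ n in atTop, Real.GammaSeq c n * Real.GammaSeq (c-a-b) n /
        (Real.GammaSeq (c-a) n * Real.GammaSeq (c-b) n)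
        = poch (c-a) (n+1) * poch (c-b) (n+1) / (poch c (n+1) * poch (c-a-b) (n+1)) := by
      filter_upwards [eventually_ge_atTop 1] with n hn
      have hnpos : (0:ℝ) < n := by exact_mod_cast hn
      have hfac : ((n.factorial : ℝ)) ≠ 0 := Nat.cast_ne_zero.2 n.factorial_ne_zero
      have hpc : poch c (n+1) ≠ 0 := poch_ne_zero hcne (n+1)
      have hpd : poch (c-a-b) (n+1) ≠ 0 := ne_of_gt (poch_pos h (n+1))
      have hpa : poch (c-a) (n+1) ≠ 0 := poch_ne_zero hdane (n+1)
      have hpb : poch (c-b) (n+1) ≠ 0 := poch_ne_zero hdbne (n+1)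
      have hgs : ∀ x : ℝ, Real.GammaSeq x n = (n:ℝ) ^ x * n.factorial / poch x (n+1) := by
        intro x; rfl
      rw [hgs, hgs, hgs, hgs]
      have hrpow : ∀ x : ℝ, (n:ℝ) ^ x ≠ 0 := fun x => ne_of_gt (rpow_pos_of_pos hnpos x)
      have hkey : (n:ℝ) ^ c * (n:ℝ) ^ (c-a-b) = (n:ℝ) ^ (c-a) * (n:ℝ) ^ (c-b) := by
        rw [← Real.rpow_add hnpos, ← Real.rpow_add hnpos]
        congr 1; ring
      field_simp
      linear_combination hkey
    have hshift : Tendsto (fun n : ℕ => poch (c-a) (n+1) * poch (c-b) (n+1) /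
        (poch c (n+1) * poch (c-a-b) (n+1))) atTop
        (𝓝 (Real.Gamma c * Real.Gamma (c-a-b) / (Real.Gamma (c-a) * Real.Gamma (c-b)))) :=
      Tendsto.congr' heq hG
    exact (tendsto_add_atTop_iff_nat 1).1 hshift


theorem euler_summation (a b c : ℝ) (h : 0 < c - a - b) (hc : ∀ n : ℕ, c ≠ -n) :
    F21 a b c 1 = Real.Gamma c * Real.Gamma (c - a - b)
      / (Real.Gamma (c - a) * Real.Gamma (c - b)) := by
  have hcne : ∀ i : ℕ, c + (i:ℝ) ≠ 0 := fun i hcon => hc i (by linarith)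
  have hF : F21 a b c 1 = ∑' n, hT a b c n := by
    unfold F21 hT; simp
  have hRF : ∀ m : ℕ, poch (c-a) m * poch (c-b) m / (poch c m * poch (c-a-b) m)
      * ∑' n, hT a b (c+m) n = ∑' n, hT a b c n := by
    intro m
    have hpc : poch c m ≠ 0 := poch_ne_zero hcne m
    have hpd : poch (c-a-b) m ≠ 0 := ne_of_gt (poch_pos h m)
    have hse := shift_eq a b c h hcne m
    rw [div_mul_eq_mul_div, div_eq_iff (mul_ne_zero hpc hpd)]
    linear_combination -hse
  have h1 := tendsto_F_one a b c h hcne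
  have hne : ∀ᶠ m : ℕ in atTop, (∑' n, hT a b (c+m) n) ≠ 0 := h1.eventually_ne one_ne_zero
  have h2 : Tendsto (fun m : ℕ => (∑' n, hT a b c n) / (∑' n, hT a b (c+m) n)) atTop
      (𝓝 ((∑' n, hT a b c n) / 1)) :=
    tendsto_const_nhds.div h1 one_ne_zero
  have h3 : Tendsto (fun m : ℕ => poch (c-a) m * poch (c-b) m / (poch c m * poch (c-a-b) m))
      atTop (𝓝 ((∑' n, hT a b c n) / 1)) := by
    apply Tendsto.congr' _ h2
    filter_upwards [hne] with m hm
    rw [eq_comm, eq_div_iff hm]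
    exact hRF m
  rw [div_one] at h3
  rw [hF]
  exact tendsto_nhds_unique h3 (tendsto_R a b c h hc)
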